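/- Let n ≥ 1 be an integer, let u ∈ {0,1}, and let ζ = exp(πi/n) ∈ ℂ. Then −(1/2)·( (1/(2n)) Σ_{j=1}^{2n−1} ζ^{−j}/(1−ζ^{−j})² − (1/2)(−1)^u ) + (1/8)·(1/(4n))·( Σ_{j=1}^{2n−1} (1+ζ^{−j})(1+ζ^{j})/((1−ζ^{−j})(1−ζ^{j})) + 2n ) = (n + 2(−1)^u)/8 (an equality of complex numbers, the right-hand side being a rational number viewed in ℂ). -/

import Mathlib

open Finset Complex

private lemma sum_range_cast' (N : ℕ) : ∑ k ∈ range N, (k:ℂ) = N*(N-1)/2 := by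
  induction N with
  | zero => simp
  | succ N ih => rw [Finset.sum_range_succ, ih]; push_cast; ring

private lemma sum_range_sq_cast' (N : ℕ) : ∑ k ∈ range N, (k:ℂ)^2 = N*(N-1)*(2*N-1)/6 := by
  induction N with
  | zero => simp
  | succ N ih => rw [Finset.sum_range_succ, ih]; push_cast; ring

private lemma sumG (m : ℕ) (hm : 1 ≤ m) (w : ℂ) (hw : w ^ m = 1) (h1 : w ≠ 1) :
    ∑ j ∈ Icc 1 (m-1), w ^ j = -1 := by
  have h0 : ∑ j ∈ range m, w ^ j = 0 := by
    rw [geom_sum_eq h1, hw]; simp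
  have hins : range m = insert 0 (Icc 1 (m-1)) := by
    ext k; simp only [Finset.mem_insert, Finset.mem_Icc, Finset.mem_range]; omega
  rw [hins, Finset.sum_insert (by simp)] at h0
  rw [pow_zero] at h0
  linear_combination h0

private lemma P1' (x : ℂ) (N : ℕ) :
    (x-1) * ∑ k ∈ range N, (k:ℂ)*x^k = ((N:ℂ)-1)*x^N + 1 - ∑ k ∈ range N, x^k := by
  induction N with
  | zero => simp
  | succ N ih =>
    rw [Finset.sum_range_succ, Finset.sum_range_succ (f := fun k => x^k)]
    push_cast
    linear_combination ih

private lemma P2' (x : ℂ) (N : ℕ) :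
    (x-1) * ∑ k ∈ range N, (k:ℂ)^2*x^k
      = ((N:ℂ)-1)^2*x^N - 2*(∑ k ∈ range N, (k:ℂ)*x^k) + (∑ k ∈ range N, x^k) - 1 := by
  induction N with
  | zero => simp
  | succ N ih =>
    rw [Finset.sum_range_succ, Finset.sum_range_succ (f := fun k => (k:ℂ)*x^k),
      Finset.sum_range_succ (f := fun k => x^k)]
    push_cast
    linear_combination ih

private lemma point (m : ℕ) (hm : 2 ≤ m) (x : ℂ) (hxm : x ^ m = 1) (hx1 : x ≠ 1) :
    x / (1-x)^2 = (1/(2*(m:ℂ))) * ∑ k ∈ range m, ((m:ℂ)*k - (k:ℂ)^2) * x^k := by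
  have hx1' : x - 1 ≠ 0 := sub_ne_zero.mpr hx1
  have hm0 : (m:ℂ) ≠ 0 := Nat.cast_ne_zero.mpr (by omega)
  have hgeom : ∑ k ∈ range m, x ^ k = 0 := by
    rw [geom_sum_eq hx1, hxm]; simp
  have hT1 : (x-1) * ∑ k ∈ range m, (k:ℂ)*x^k = (m:ℂ) := by
    rw [P1' x m, hxm, hgeom]; ring
  have hT2 : (x-1) * ∑ k ∈ range m, (k:ℂ)^2*x^k
      = ((m:ℂ)-1)^2 - 2*(∑ k ∈ range m, (k:ℂ)*x^k) - 1 := by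
    rw [P2' x m, hxm, hgeom]; ring
  have hsplit : ∑ k ∈ range m, ((m:ℂ)*k - (k:ℂ)^2) * x^k
      = (m:ℂ) * (∑ k ∈ range m, (k:ℂ)*x^k) - ∑ k ∈ range m, (k:ℂ)^2*x^k := by
    rw [Finset.mul_sum, ← Finset.sum_sub_distrib]
    apply Finset.sum_congr rfl; intro k _; ring
  rw [hsplit]
  have key : 2*(m:ℂ)*x
      = ((m:ℂ) * (∑ k ∈ range m, (k:ℂ)*x^k) - ∑ k ∈ range m, (k:ℂ)^2*x^k)*(1-x)^2 := by
    linear_combination (-(m:ℂ)*(x-1) - 2) * hT1 + (x-1) * hT2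
  have hne : (1-x)^2 ≠ 0 := pow_ne_zero _ (by intro h; apply hx1'; linear_combination -h)
  have h2m : (2*(m:ℂ)) ≠ 0 := by simpa using hm0
  rw [div_eq_iff hne, one_div, inv_mul_eq_div, div_mul_eq_mul_div, eq_div_iff h2m]
  linear_combination key

private lemma sumF (m : ℕ) (hm : 2 ≤ m) (x : ℕ → ℂ)
    (hxm : ∀ j ∈ Icc 1 (m-1), (x j) ^ m = 1)
    (hx1 : ∀ j ∈ Icc 1 (m-1), x j ≠ 1)
    (hpow : ∀ k ∈ Icc 1 (m-1), ∑ j ∈ Icc 1 (m-1), (x j) ^ k = -1) :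
    ∑ j ∈ Icc 1 (m-1), (x j) / (1 - x j)^2 = (1 - (m:ℂ)^2)/12 := by
  have hm0 : (m:ℂ) ≠ 0 := Nat.cast_ne_zero.mpr (by omega)
  have h1 : ∑ j ∈ Icc 1 (m-1), (x j) / (1 - x j)^2
      = ∑ j ∈ Icc 1 (m-1), (1/(2*(m:ℂ))) * ∑ k ∈ range m, ((m:ℂ)*k - (k:ℂ)^2) * (x j)^k :=
    Finset.sum_congr rfl fun j hj => point m hm (x j) (hxm j hj) (hx1 j hj)
  rw [h1, ← Finset.mul_sum, Finset.sum_comm]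
  have h2 : ∀ k ∈ range m, ∑ j ∈ Icc 1 (m-1), ((m:ℂ)*k - (k:ℂ)^2) * (x j)^k
      = ((m:ℂ)*k - (k:ℂ)^2) * (-1) := by
    intro k hk
    rw [← Finset.mul_sum]
    rcases Nat.eq_zero_or_pos k with h0 | h0
    · subst h0; simp
    · rw [hpow k (by simp only [Finset.mem_range] at hk; simp only [Finset.mem_Icc]; omega)]
  rw [Finset.sum_congr rfl h2]
  have h3 : ∑ k ∈ range m, ((m:ℂ)*k - (k:ℂ)^2) * (-1)
      = (∑ k ∈ range m, (k:ℂ)^2) - (m:ℂ) * ∑ k ∈ range m, (k:ℂ) := by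
    rw [Finset.mul_sum, ← Finset.sum_sub_distrib]
    exact Finset.sum_congr rfl fun k _ => by ring
  rw [h3, sum_range_sq_cast' m, sum_range_cast' m]
  field_simp
  ring

private lemma pair_term (a : ℂ) (h0 : a ≠ 0) (h1 : a ≠ 1) :
    (1 + a⁻¹) * (1 + a) / ((1 - a⁻¹) * (1 - a)) = -4 * (a / (1 - a)^2) - 1 := by
  have h1' : (1:ℂ) - a ≠ 0 := by intro h; apply h1; linear_combination -h
  have hq : (-(((1:ℂ)-a)^2)) ≠ 0 := by
    simpa using pow_ne_zero 2 h1'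
  field_simp
  ring

theorem delta_prism_v0 (n : ℕ) (hn : 1 ≤ n) (u : ℕ) (hu : u ≤ 1) (ζ : ℂ)
    (hζ : ζ = Complex.exp (Real.pi * Complex.I / n)) :
    -(1 / 2) *
        ((1 / (2 * (n : ℂ))) *
            (∑ j ∈ Finset.Icc 1 (2 * n - 1), ζ ^ (-(j : ℤ)) / (1 - ζ ^ (-(j : ℤ))) ^ 2) -
          (1 / 2) * (-1 : ℂ) ^ u) +
      (1 / 8) * (1 / (4 * (n : ℂ))) *
        ((∑ j ∈ Finset.Icc 1 (2 * n - 1),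
          (1 + ζ ^ (-(j : ℤ))) * (1 + ζ ^ (j : ℤ)) /
            ((1 - ζ ^ (-(j : ℤ))) * (1 - ζ ^ (j : ℤ)))) + 2 * (n : ℂ)) =
      ((n : ℂ) + 2 * (-1 : ℂ) ^ u) / 8 := by
  have hn0 : (n:ℂ) ≠ 0 := Nat.cast_ne_zero.mpr (by omega)
  have hπ : (Real.pi:ℂ) ≠ 0 := Complex.ofReal_ne_zero.mpr Real.pi_ne_zero
  have hζ0 : ζ ≠ 0 := by rw [hζ]; exact Complex.exp_ne_zero _
  have hpowk : ∀ k : ℕ, ζ ^ k = Complex.exp (k * (Real.pi * Complex.I / n)) := by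
    intro k; rw [hζ, ← Complex.exp_nat_mul]
  have hζm : ζ ^ (2*n) = 1 := by
    rw [hpowk, show ((2*n:ℕ):ℂ) * (Real.pi * Complex.I / n)
        = 2*Real.pi*Complex.I by push_cast; field_simp]
    exact Complex.exp_two_pi_mul_I
  have hnt : ∀ k ∈ Icc 1 (2*n-1), ζ ^ k ≠ 1 := by
    intro k hk h1
    simp only [Finset.mem_Icc] at hk
    rw [hpowk, Complex.exp_eq_one_iff] at h1
    obtain ⟨t, ht⟩ := h1
    have h4 : (k:ℂ) * (Real.pi*Complex.I) = (2*(t:ℂ)*(n:ℂ)) * (Real.pi*Complex.I) := by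
      field_simp at ht
      linear_combination (Real.pi*Complex.I) * ht
    have h3 : (k:ℂ) = 2*(t:ℂ)*(n:ℂ) :=
      mul_right_cancel₀ (mul_ne_zero hπ Complex.I_ne_zero) h4
    have h5 : (k:ℤ) = 2*t*(n:ℤ) := by exact_mod_cast h3
    have hdvd : (2*(n:ℤ)) ∣ (k:ℤ) := ⟨t, by linarith⟩
    have hle : (2*(n:ℤ)) ≤ (k:ℤ) := Int.le_of_dvd (by exact_mod_cast Nat.lt_of_lt_of_le Nat.zero_lt_one hk.1) hdvd
    have : 2*n ≤ k := by exact_mod_cast hle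
    omega
  have hζm' : (ζ⁻¹) ^ (2*n) = 1 := by rw [inv_pow, hζm, inv_one]
  have hnt' : ∀ k ∈ Icc 1 (2*n-1), (ζ⁻¹) ^ k ≠ 1 := by
    intro k hk
    rw [inv_pow, Ne, inv_eq_one]
    exact hnt k hk
  have hm2 : 2 ≤ 2*n := by omega
  -- sums of powers
  have hpow_fam : ∀ w : ℂ, w ^ (2*n) = 1 → (∀ k ∈ Icc 1 (2*n-1), w ^ k ≠ 1) →
      ∀ k ∈ Icc 1 (2*n-1), ∑ j ∈ Icc 1 (2*n-1), (w^j) ^ k = -1 := by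
    intro w hw hwk k hk
    have : ∀ j, (w^j)^k = (w^k)^j := fun j => by
      rw [← pow_mul, ← pow_mul, mul_comm]
    rw [Finset.sum_congr rfl fun j _ => this j]
    exact sumG (2*n) (by omega) (w^k)
      (by rw [← pow_mul, mul_comm, pow_mul, hw, one_pow]) (hwk k hk)
  have hS1 : ∑ j ∈ Icc 1 (2*n-1), (ζ⁻¹)^j / (1 - (ζ⁻¹)^j)^2 = (1 - ((2*n:ℕ):ℂ)^2)/12 := by
    apply sumF (2*n) hm2
    · intro j hj; rw [← pow_mul, mul_comm, pow_mul, hζm', one_pow]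
    · exact hnt'
    · exact hpow_fam ζ⁻¹ hζm' hnt'
  have hS1p : ∑ j ∈ Icc 1 (2*n-1), ζ^j / (1 - ζ^j)^2 = (1 - ((2*n:ℕ):ℂ)^2)/12 := by
    apply sumF (2*n) hm2
    · intro j hj; rw [← pow_mul, mul_comm, pow_mul, hζm, one_pow]
    · exact hnt
    · exact hpow_fam ζ hζm hnt
  -- rewrite zpow into pow
  simp only [zpow_neg, zpow_natCast, ← inv_pow]
  rw [hS1]
  have hS2 : ∑ j ∈ Icc 1 (2*n-1),
      (1 + (ζ⁻¹)^j) * (1 + ζ^j) / ((1 - (ζ⁻¹)^j) * (1 - ζ^j))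
      = -4 * ((1 - ((2*n:ℕ):ℂ)^2)/12) - ((2*n-1:ℕ):ℂ) := by
    have step : ∀ j ∈ Icc 1 (2*n-1),
        (1 + (ζ⁻¹)^j) * (1 + ζ^j) / ((1 - (ζ⁻¹)^j) * (1 - ζ^j))
        = -4 * (ζ^j / (1 - ζ^j)^2) - 1 := by
      intro j hj
      rw [inv_pow]
      exact pair_term (ζ^j) (pow_ne_zero _ hζ0) (hnt j hj)
    rw [Finset.sum_congr rfl step, Finset.sum_sub_distrib, ← Finset.mul_sum, hS1p,
      Finset.sum_const, Nat.card_Icc]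
    simp
  rw [hS2]
  have hc1 : ((2*n:ℕ):ℂ) = 2*(n:ℂ) := by push_cast; ring
  have hc2 : ((2*n-1:ℕ):ℂ) = 2*(n:ℂ) - 1 := by
    have : (2*n-1:ℕ) = 2*n-1 := rfl
    push_cast [Nat.cast_sub (by omega : 1 ≤ 2*n)]
    ring
  rw [hc1, hc2]
  field_simp
  ring
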